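/- Let α, γ ∈ ℍ satisfy Re(α) = Re(γ), |α| = |γ|, and Im(α) ≠ 0 (hence also Im(γ) ≠ 0, so α − star α and γ − star γ are invertible). Then (γ − star α)·(α − star α)⁻¹ = (γ − star γ)⁻¹·(γ − star α) and (α − γ)·(α − star α)⁻¹ = (γ − star γ)⁻¹·(γ − α). -/

import Mathlib

open Quaternion Filter Matrix

noncomputable section

/-- The imaginary unit `i` of the real quaternions. -/
def qi : ℍ := ⟨0, 1, 0, 0⟩

/-- The imaginary unit `j` of the real quaternions. -/
def qj : ℍ := ⟨0, 0, 1, 0⟩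

/-- The Pick matrix of `f : ℍ → ℍ` at the points `z 0, …, z (n-1)` of the unit ball:
its `(i,j)` entry is `∑ₖ (z i)^k (1 - f(z i) * star f(z j)) (star (z j))^k`. -/
def pickMatrix {n : ℕ} (f : ℍ → ℍ) (z : Fin n → ℍ) : Matrix (Fin n) (Fin n) ℍ :=
  Matrix.of fun i j => ∑' k : ℕ, z i ^ k * (1 - f (z i) * star (f (z j))) * (star (z j)) ^ k

/-- A quaternionic matrix is positive semidefinite if every quadratic form
`∑ᵢⱼ star (v i) * P i j * v j` is a nonnegative real scalar quaternion. -/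
def QPosSemidef {n : ℕ} (P : Matrix (Fin n) (Fin n) ℍ) : Prop :=
  ∀ v : Fin n → ℍ, ∃ r : ℝ, 0 ≤ r ∧ (∑ i, ∑ j, star (v i) * P i j * v j) = (r : ℍ)

/-- `f` is left-regular on the unit ball: it is given there by an (absolutely convergent)
power series with quaternionic coefficients on the right. -/
def LeftRegular (f : ℍ → ℍ) : Prop :=
  ∃ c : ℕ → ℍ,
    Filter.limsup (fun k : ℕ => ‖c k‖ ^ (1 / (k : ℝ))) Filter.atTop ≤ 1 ∧
    ∀ α : ℍ, ‖α‖ < 1 → f α = ∑' k : ℕ, α ^ k * c k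

/-- The `n × n` lower-triangular Toeplitz matrix built from a sequence. -/
def toeplitz {R : Type*} [Zero R] (n : ℕ) (g : ℕ → R) : Matrix (Fin n) (Fin n) R :=
  Matrix.of fun i j => if (j : ℕ) ≤ (i : ℕ) then g ((i : ℕ) - (j : ℕ)) else 0

/-- Two elementary identities relating `α, star α, γ, star γ` for conjugate quaternions
`α ∼ γ` with nonzero imaginary parts. -/
theorem conjugate_resolvent_identities (α γ : ℍ)
    (hre : α.re = γ.re) (hn : ‖α‖ = ‖γ‖) (him : α.im ≠ 0) :
    (γ - star α) * (α - star α)⁻¹ = (γ - star γ)⁻¹ * (γ - star α) ∧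
    (α - γ) * (α - star α)⁻¹ = (γ - star γ)⁻¹ * (γ - α) := by
  have hnsq : normSq α = normSq γ := by
    rw [normSq_eq_norm_mul_self, normSq_eq_norm_mul_self, hn]
  rw [normSq_def', normSq_def'] at hnsq
  have him2 : α.imI^2 + α.imJ^2 + α.imK^2 = γ.imI^2 + γ.imJ^2 + γ.imK^2 := by
    linear_combination hnsq - (α.re + γ.re) * hre
  have him' : ¬(α.imI = 0 ∧ α.imJ = 0 ∧ α.imK = 0) := by
    rintro ⟨h1, h2, h3⟩
    exact him (by ext <;> simp [h1, h2, h3])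
  have hB : α - star α ≠ 0 := by
    intro h
    apply him'
    refine ⟨?_, ?_, ?_⟩
    · simpa using congrArg QuaternionAlgebra.imI h
    · simpa using congrArg QuaternionAlgebra.imJ h
    · simpa using congrArg QuaternionAlgebra.imK h
  have hC : γ - star γ ≠ 0 := by
    intro h
    have h1 := congrArg QuaternionAlgebra.imI h
    have h2 := congrArg QuaternionAlgebra.imJ h
    have h3 := congrArg QuaternionAlgebra.imK h
    simp at h1 h2 h3
    apply him'
    refine ⟨?_, ?_, ?_⟩
    · nlinarith [him2, sq_nonneg α.imJ, sq_nonneg α.imK]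
    · nlinarith [him2, sq_nonneg α.imI, sq_nonneg α.imK]
    · nlinarith [him2, sq_nonneg α.imI, sq_nonneg α.imJ]
  have key : ∀ X Y : ℍ, (γ - star γ) * X = Y * (α - star α) →
      X * (α - star α)⁻¹ = (γ - star γ)⁻¹ * Y := by
    intro X Y h
    have e1 : X = (γ - star γ)⁻¹ * (Y * (α - star α)) := by
      rw [← h, inv_mul_cancel_left₀ hC]
    rw [e1, mul_assoc, mul_assoc, mul_inv_cancel₀ hB, mul_one]
  constructor
  · apply key
    ext <;> simp [Quaternion.ext_iff, Quaternion.re_mul, Quaternion.imI_mul,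
      Quaternion.imJ_mul, Quaternion.imK_mul, hre] <;>
      (try ring)
    all_goals linarith [him2]
  · apply key
    ext <;> simp [Quaternion.ext_iff, Quaternion.re_mul, Quaternion.imI_mul,
      Quaternion.imJ_mul, Quaternion.imK_mul, hre] <;>
      (try ring)
    all_goals linarith [him2]
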